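/- Let G = Σ1 × ⋯ × Σr (r ≥ 2) with generators a_i^(k), b_i^(k), and set x_i = a_i^(1), c_i = a_i^(1)(b_i^(1))^{-1}, d = [b_1^(1), b_2^(1)], f_i^(k) = a_i^(1)(a_i^(k))^{-1}. Then in G: [x_1, x_2] = d^{-1}, and the element [a_1^(1), a_2^(1)][b_1^(1), b_2^(1)] (which equals 1) can be rewritten as d^{-1} c_1^{-1} f_1^(k) c_2^{-1} (f_1^(k))^{-1} d^{-1} f_2^(k) c_1 (f_2^(k))^{-1} c_2 for each k ∈ {2,…,r}; in particular this latter word equals 1 in G. -/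

import Mathlib

open FreeGroup
open scoped commutatorElement

def surfRels : Set (FreeGroup (Fin 4)) :=
  {⁅FreeGroup.of (0 : Fin 4), FreeGroup.of (1 : Fin 4)⁆ * ⁅FreeGroup.of (2 : Fin 4), FreeGroup.of (3 : Fin 4)⁆}

/-- The genus-2 surface group. -/
abbrev Surf := PresentedGroup surfRels

def a (i : Fin 2) : Surf := PresentedGroup.of ⟨i.val, by omega⟩
def b (i : Fin 2) : Surf := PresentedGroup.of ⟨i.val + 2, by omega⟩

abbrev M := Multiplicative (ℤ × ℤ)

def φgen : Fin 4 → M :=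
  fun n => Multiplicative.ofAdd (if n.val = 0 ∨ n.val = 2 then ((1 : ℤ), (0 : ℤ)) else ((0 : ℤ), (1 : ℤ)))

lemma φrels : ∀ r ∈ surfRels, FreeGroup.lift φgen r = 1 := by
  rintro r hr
  simp only [surfRels, Set.mem_singleton_iff] at hr
  subst hr
  have h1 : (FreeGroup.lift φgen) (⁅FreeGroup.of (0 : Fin 4), FreeGroup.of (1 : Fin 4)⁆ * ⁅FreeGroup.of (2 : Fin 4), FreeGroup.of (3 : Fin 4)⁆) = ⁅φgen 0, φgen 1⁆ * ⁅φgen 2, φgen 3⁆ := by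
    simp [commutatorElement_def]
  rw [h1, commutatorElement_eq_one_iff_mul_comm.mpr (mul_comm _ _),
    commutatorElement_eq_one_iff_mul_comm.mpr (mul_comm _ _), one_mul]

/-- The homomorphism Σ → ℤ² sending aᵢ, bᵢ to the i-th standard basis vector. -/
def φ1 : Surf →* M := PresentedGroup.toGroup φrels

/-- The direct product of r genus-2 surface groups. -/
abbrev GG (r : ℕ) := ∀ _ : Fin r, Surf

def A (r : ℕ) (i : Fin 2) (k : Fin r) : GG r := Pi.mulSingle k (a i)
def B (r : ℕ) (i : Fin 2) (k : Fin r) : GG r := Pi.mulSingle k (b i)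

/-- The homomorphism G = Σ₁ × ⋯ × Σr → ℤ² sending all aᵢ, bᵢ to eᵢ. -/
def Φ (r : ℕ) : GG r →* M := ∏ k : Fin r, φ1.comp (Pi.evalMonoidHom (fun _ => Surf) k)

lemma surf_rel : ⁅a 0, a 1⁆ * ⁅b 0, b 1⁆ = (1 : Surf) := by
  have h : (PresentedGroup.mk surfRels) (⁅FreeGroup.of (0 : Fin 4), FreeGroup.of (1 : Fin 4)⁆ *
      ⁅FreeGroup.of (2 : Fin 4), FreeGroup.of (3 : Fin 4)⁆) = 1 :=
    (QuotientGroup.eq_one_iff _).2 (Subgroup.subset_normalClosure rfl)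
  simp only [_root_.map_mul, map_commutatorElement] at h
  exact h

lemma key {G : Type*} [Group G] (x y u v : G) (ha : ⁅x, y⁆ * ⁅u, v⁆ = 1) :
    ⁅u, v⁆⁻¹ * (x * u⁻¹)⁻¹ * x * (y * v⁻¹)⁻¹ * x⁻¹ * ⁅u, v⁆⁻¹ * y * (x * u⁻¹) * y⁻¹ *
      (y * v⁻¹) = 1 := by
  have h1 : ⁅u, v⁆⁻¹ = ⁅x, y⁆ := inv_eq_of_mul_eq_one_left ha
  rw [h1]
  calc ⁅x, y⁆ * (x * u⁻¹)⁻¹ * x * (y * v⁻¹)⁻¹ * x⁻¹ * ⁅x, y⁆ * y * (x * u⁻¹) * y⁻¹ *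
      (y * v⁻¹) = ⁅x, y⁆ * ⁅u, v⁆ := by group
    _ = 1 := ha

/-- In `G = Σ₁ × ⋯ × Σr`, with `xᵢ = aᵢ⁽¹⁾`: `[x₁, x₂] = d⁻¹`, and for each
`k ∈ {2,…,r}` the word `d⁻¹ c₁⁻¹ f₁⁽ᵏ⁾ c₂⁻¹ (f₁⁽ᵏ⁾)⁻¹ d⁻¹ f₂⁽ᵏ⁾ c₁ (f₂⁽ᵏ⁾)⁻¹ c₂`
(a rewriting of `[a₁⁽¹⁾,a₂⁽¹⁾][b₁⁽¹⁾,b₂⁽¹⁾]`) equals `1`. -/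
theorem stmt12 (r : ℕ) (hr : 2 ≤ r) :
    (letI o : Fin r := ⟨0, by omega⟩
     letI c : Fin 2 → GG r := fun i => A r i o * (B r i o)⁻¹
     letI d : GG r := ⁅B r 0 o, B r 1 o⁆
     ⁅A r 0 o, A r 1 o⁆ = d⁻¹ ∧
     ∀ k : Fin r, k ≠ o →
       letI f : Fin 2 → GG r := fun i => A r i o * (A r i k)⁻¹
       d⁻¹ * (c 0)⁻¹ * f 0 * (c 1)⁻¹ * (f 0)⁻¹ * d⁻¹ * f 1 * c 0 * (f 1)⁻¹ * c 1 = 1) := by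
  have h1 : ⁅a 0, a 1⁆ = ⁅b 0, b 1⁆⁻¹ := eq_inv_of_mul_eq_one_left surf_rel
  refine ⟨?_, ?_⟩
  · funext j
    simp only [A, B, commutatorElement_def, Pi.inv_apply, Pi.mul_apply, Pi.mulSingle_apply]
    by_cases hj : j = ⟨0, by omega⟩
    · simp only [if_pos hj]
      simpa [commutatorElement_def] using h1
    · simp [if_neg hj]
  · intro k hk
    funext j
    simp only [A, B, commutatorElement_def, Pi.inv_apply, Pi.mul_apply, Pi.mulSingle_apply,
      Pi.one_apply]
    by_cases hj : j = ⟨0, by omega⟩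
    · rw [if_pos hj, if_pos hj, if_pos hj, if_pos hj]
      rw [if_neg (hj ▸ Ne.symm hk), if_neg (hj ▸ Ne.symm hk)]
      have := key (a 0) (a 1) (b 0) (b 1) surf_rel
      simp only [commutatorElement_def] at this
      simp only [inv_one, mul_one]
      exact this
    · rw [if_neg hj, if_neg hj, if_neg hj, if_neg hj]
      by_cases hjk : j = k
      · rw [if_pos hjk, if_pos hjk]
        group
      · rw [if_neg hjk, if_neg hjk]
        group
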